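/- Fix a fitness landscape with a_σ > 0 for all σ ∈ {0,1}^L and a mutation rate 0 < μ < 1/2. Then each coordinate function r^σ of the quasispecies map is Lipschitz on the set of probability distributions over {0,1}^L with respect to the ℓ¹ norm, with Lipschitz constant K = (max_τ a_τ / min_τ a_τ)·((1−μ)^L − μ^L); that is, for all probability vectors x, y on {0,1}^L and all σ, |r^σ(x) − r^σ(y)| ≤ K·‖x − y‖₁. Moreover, for every probability vector x and all σ, σ', the partial derivative satisfies |∂r^{σ'}(x)/∂x_σ| = (a_σ/Σ_τ a_τ x_τ)·|Q_{σσ'} − r^{σ'}(x)| ≤ K. -/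

import Mathlib

open Finset

abbrev Genome (L : ℕ) := Fin L → Bool

/-- Mutation transition matrix entry: `Q_{στ} = μ^{d_H(σ,τ)} (1-μ)^{L-d_H(σ,τ)}`. -/
noncomputable def Qmat (L : ℕ) (μ : ℝ) (σ τ : Genome L) : ℝ :=
  μ ^ (hammingDist σ τ) * (1 - μ) ^ (L - hammingDist σ τ)

/-- The quasispecies map `r`: `r^σ(x) = (Σ_τ a_τ Q_{τσ} x_τ)/(Σ_τ a_τ x_τ)`. -/
noncomputable def qmap {L : ℕ} (a : Genome L → ℝ) (μ : ℝ) (x : Genome L → ℝ)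
    (σ : Genome L) : ℝ :=
  (∑ τ, a τ * Qmat L μ τ σ * x τ) / (∑ τ, a τ * x τ)

lemma Qmat_bounds {L : ℕ} {μ : ℝ} (hμ0 : 0 < μ) (hμhalf : μ < 1/2) (σ τ : Genome L) :
    μ ^ L ≤ Qmat L μ σ τ ∧ Qmat L μ σ τ ≤ (1 - μ) ^ L := by
  have hμ1 : μ ≤ 1 - μ := by linarith
  have hd : hammingDist σ τ ≤ L := by
    have := hammingDist_le_card_fintype (x := σ) (y := τ)
    simpa using this
  have h1 : μ ^ L = μ ^ hammingDist σ τ * μ ^ (L - hammingDist σ τ) := by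
    rw [← pow_add, Nat.add_sub_cancel' hd]
  have h2 : (1-μ) ^ L = (1-μ) ^ hammingDist σ τ * (1-μ) ^ (L - hammingDist σ τ) := by
    rw [← pow_add, Nat.add_sub_cancel' hd]
  constructor
  · rw [h1]; unfold Qmat
    gcongr
  · rw [h2]; unfold Qmat
    gcongr
    exact pow_nonneg (by linarith) _

lemma B_ge {L : ℕ} (a : Genome L → ℝ)
    (x : Genome L → ℝ) (hx : ∀ τ, 0 ≤ x τ) (hs : ∑ τ, x τ = 1) :
    Finset.univ.inf' Finset.univ_nonempty a ≤ ∑ τ, a τ * x τ := by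
  calc Finset.univ.inf' Finset.univ_nonempty a
      = ∑ τ, Finset.univ.inf' Finset.univ_nonempty a * x τ := by
        rw [← Finset.mul_sum, hs, mul_one]
    _ ≤ ∑ τ, a τ * x τ :=
        Finset.sum_le_sum fun τ _ =>
          mul_le_mul_of_nonneg_right (Finset.inf'_le a (mem_univ τ)) (hx τ)

lemma qmap_bounds {L : ℕ} (a : Genome L → ℝ) (ha : ∀ σ, 0 < a σ) {μ : ℝ}
    (hμ0 : 0 < μ) (hμhalf : μ < 1/2)
    (x : Genome L → ℝ) (hx : ∀ τ, 0 ≤ x τ) (hs : ∑ τ, x τ = 1) (σ : Genome L) :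
    μ ^ L ≤ qmap a μ x σ ∧ qmap a μ x σ ≤ (1 - μ) ^ L := by
  have hm0 : (0:ℝ) < Finset.univ.inf' Finset.univ_nonempty a :=
    (Finset.lt_inf'_iff _).2 fun τ _ => ha τ
  have hB0 : 0 < ∑ τ, a τ * x τ := lt_of_lt_of_le hm0 (B_ge a x hx hs)
  constructor
  · rw [qmap, le_div_iff₀ hB0, Finset.mul_sum]
    refine Finset.sum_le_sum fun τ _ => ?_
    have h := (Qmat_bounds hμ0 hμhalf τ σ).1
    nlinarith [mul_nonneg (ha τ).le (hx τ)]
  · rw [qmap, div_le_iff₀ hB0, Finset.mul_sum]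
    refine Finset.sum_le_sum fun τ _ => ?_
    have h := (Qmat_bounds hμ0 hμhalf τ σ).2
    nlinarith [mul_nonneg (ha τ).le (hx τ)]

lemma qmap_sub_eq {L : ℕ} (a : Genome L → ℝ) (μ : ℝ) (x y : Genome L → ℝ)
    (hBx : (∑ τ, a τ * x τ) ≠ 0) (hBy : (∑ τ, a τ * y τ) ≠ 0) (σ : Genome L) :
    qmap a μ x σ - qmap a μ y σ =
      (∑ τ, a τ * (Qmat L μ τ σ - qmap a μ y σ) * (x τ - y τ)) / (∑ τ, a τ * x τ) := by
  have hsum : ∀ r : ℝ, ∑ τ, a τ * (Qmat L μ τ σ - r) * (x τ - y τ)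
      = (∑ τ, a τ * Qmat L μ τ σ * x τ) - (∑ τ, a τ * Qmat L μ τ σ * y τ)
        - r * ((∑ τ, a τ * x τ) - (∑ τ, a τ * y τ)) := by
    intro r
    have h : ∀ τ : Genome L, a τ * (Qmat L μ τ σ - r) * (x τ - y τ) =
        (a τ * Qmat L μ τ σ * x τ - a τ * Qmat L μ τ σ * y τ)
        - (r * (a τ * x τ) - r * (a τ * y τ)) := fun τ => by ring
    simp_rw [h, Finset.sum_sub_distrib, ← Finset.mul_sum]
    ring
  rw [hsum]
  rw [qmap, qmap]
  field_simp
  ring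


/-- **Lipschitz continuity of the quasispecies map (Lemma).**
Fix fitnesses `a σ > 0` and a mutation rate `0 < μ < 1/2`, and set
`K = (max_τ a_τ / min_τ a_τ)·((1−μ)^L − μ^L)`.  Then:
(1) each coordinate `r^σ` of the quasispecies map is `K`-Lipschitz on the set of
probability vectors on `{0,1}^L` with respect to the `ℓ¹` norm; and
(2) for every probability vector `x` and all `σ, σ'`, the partial derivative of `r^{σ'}`
in the coordinate `x_σ` satisfies
`|∂r^{σ'}(x)/∂x_σ| = (a_σ / Σ_τ a_τ x_τ)·|Q_{σσ'} − r^{σ'}(x)| ≤ K`. -/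
theorem qmap_lipschitz
    (L : ℕ) (a : Genome L → ℝ) (ha : ∀ σ, 0 < a σ)
    (μ : ℝ) (hμ0 : 0 < μ) (hμhalf : μ < 1 / 2)
    (K : ℝ)
    (hK : K = ((Finset.univ.sup' Finset.univ_nonempty a) /
        (Finset.univ.inf' Finset.univ_nonempty a)) * ((1 - μ) ^ L - μ ^ L)) :
    (∀ x y : Genome L → ℝ,
      (∀ τ, 0 ≤ x τ) → (∑ τ, x τ = 1) → (∀ τ, 0 ≤ y τ) → (∑ τ, y τ = 1) →
      ∀ σ, |qmap a μ x σ - qmap a μ y σ| ≤ K * ∑ τ, |x τ - y τ|) ∧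
    (∀ x : Genome L → ℝ, (∀ τ, 0 ≤ x τ) → (∑ τ, x τ = 1) →
      ∀ σ σ' : Genome L,
        |deriv (fun s : ℝ => qmap a μ (Function.update x σ s) σ') (x σ)| =
          (a σ / ∑ τ, a τ * x τ) * |Qmat L μ σ σ' - qmap a μ x σ'| ∧
        |deriv (fun s : ℝ => qmap a μ (Function.update x σ s) σ') (x σ)| ≤ K) := by
  set m := Finset.univ.inf' Finset.univ_nonempty a with hm
  set M := Finset.univ.sup' Finset.univ_nonempty a with hM
  have hm0 : (0:ℝ) < m := (Finset.lt_inf'_iff _).2 fun τ _ => ha τ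
  have hMle : ∀ τ, a τ ≤ M := fun τ => Finset.le_sup' a (mem_univ τ)
  have haM : ∀ τ, m ≤ a τ := fun τ => Finset.inf'_le a (mem_univ τ)
  have hM0 : (0:ℝ) ≤ M := hm0.le.trans ((haM default).trans (hMle default))
  have hμ1 : μ ≤ 1 - μ := by linarith
  have hD0 : 0 ≤ (1 - μ) ^ L - μ ^ L :=
    sub_nonneg.2 (pow_le_pow_left₀ hμ0.le hμ1 L)
  have hQr : ∀ (x : Genome L → ℝ), (∀ τ, 0 ≤ x τ) → (∑ τ, x τ = 1) →
      ∀ τ σ : Genome L, |Qmat L μ τ σ - qmap a μ x σ| ≤ (1 - μ) ^ L - μ ^ L := by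
    intro x hx hxs τ σ
    have h1 := Qmat_bounds (L := L) hμ0 (by linarith) τ σ
    have h2 := qmap_bounds a ha hμ0 (by linarith) x hx hxs σ
    rw [abs_sub_le_iff]
    constructor <;> linarith [h1.1, h1.2, h2.1, h2.2]
  constructor
  · intro x y hx hxs hy hys σ
    have hBx : 0 < ∑ τ, a τ * x τ := lt_of_lt_of_le hm0 (B_ge a x hx hxs)
    have hBy : 0 < ∑ τ, a τ * y τ := lt_of_lt_of_le hm0 (B_ge a y hy hys)
    rw [qmap_sub_eq a μ x y hBx.ne' hBy.ne' σ, abs_div, abs_of_pos hBx]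
    have hnum : |∑ τ, a τ * (Qmat L μ τ σ - qmap a μ y σ) * (x τ - y τ)|
        ≤ M * ((1 - μ) ^ L - μ ^ L) * ∑ τ, |x τ - y τ| := by
      calc |∑ τ, a τ * (Qmat L μ τ σ - qmap a μ y σ) * (x τ - y τ)|
          ≤ ∑ τ, |a τ * (Qmat L μ τ σ - qmap a μ y σ) * (x τ - y τ)| :=
            Finset.abs_sum_le_sum_abs _ _
        _ ≤ ∑ τ, M * ((1 - μ) ^ L - μ ^ L) * |x τ - y τ| := by
            refine Finset.sum_le_sum fun τ _ => ?_
            rw [abs_mul, abs_mul, abs_of_pos (ha τ)]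
            have h1 := hQr y hy hys τ σ
            have h2 := hMle τ
            gcongr
        _ = M * ((1 - μ) ^ L - μ ^ L) * ∑ τ, |x τ - y τ| := by
            rw [← Finset.mul_sum]
    have hS0 : 0 ≤ ∑ τ, |x τ - y τ| :=
      Finset.sum_nonneg fun τ _ => abs_nonneg _
    calc |∑ τ, a τ * (Qmat L μ τ σ - qmap a μ y σ) * (x τ - y τ)| / (∑ τ, a τ * x τ)
        ≤ (M * ((1 - μ) ^ L - μ ^ L) * ∑ τ, |x τ - y τ|) / m := by
          gcongr
          exact B_ge a x hx hxs
      _ = K * ∑ τ, |x τ - y τ| := by rw [hK]; field_simp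
  · intro x hx hxs σ σ'
    have hB0 : 0 < ∑ τ, a τ * x τ := lt_of_lt_of_le hm0 (B_ge a x hx hxs)
    set B := ∑ τ, a τ * x τ with hBdef
    set A := ∑ τ, a τ * Qmat L μ τ σ' * x τ with hAdef
    set c1 := ∑ τ ∈ Finset.univ.erase σ, a τ * Qmat L μ τ σ' * x τ with hc1
    set c2 := ∑ τ ∈ Finset.univ.erase σ, a τ * x τ with hc2
    have hA : A = a σ * Qmat L μ σ σ' * x σ + c1 :=
      (Finset.add_sum_erase _ _ (mem_univ σ)).symm
    have hB : B = a σ * x σ + c2 :=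
      (Finset.add_sum_erase _ _ (mem_univ σ)).symm
    have hfun : (fun s : ℝ => qmap a μ (Function.update x σ s) σ')
        = fun s => (c1 + a σ * Qmat L μ σ σ' * s) / (c2 + a σ * s) := by
      funext s
      rw [qmap]
      congr 1
      · rw [← Finset.add_sum_erase _ _ (mem_univ σ), Function.update_self, add_comm]
        congr 1
        exact Finset.sum_congr rfl fun τ hτ => by
          rw [Function.update_of_ne (Finset.ne_of_mem_erase hτ)]
      · rw [← Finset.add_sum_erase _ _ (mem_univ σ), Function.update_self, add_comm]
        congr 1
        exact Finset.sum_congr rfl fun τ hτ => by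
          rw [Function.update_of_ne (Finset.ne_of_mem_erase hτ)]
    have hden : c2 + a σ * x σ ≠ 0 := by
      rw [add_comm, ← hB]; exact hB0.ne'
    have h1 : HasDerivAt (fun s : ℝ => c1 + a σ * Qmat L μ σ σ' * s)
        (a σ * Qmat L μ σ σ') (x σ) := by
      simpa using ((hasDerivAt_id (x σ)).const_mul (a σ * Qmat L μ σ σ')).const_add c1
    have h2 : HasDerivAt (fun s : ℝ => c2 + a σ * s) (a σ) (x σ) := by
      simpa using ((hasDerivAt_id (x σ)).const_mul (a σ)).const_add c2
    have hdiv := h1.div h2 hden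
    have hderiv : deriv (fun s : ℝ => qmap a μ (Function.update x σ s) σ') (x σ)
        = (a σ * Qmat L μ σ σ' * (c2 + a σ * x σ)
          - (c1 + a σ * Qmat L μ σ σ' * x σ) * (a σ)) / (c2 + a σ * x σ) ^ 2 := by
      rw [hfun]; exact hdiv.deriv
    have hq : qmap a μ x σ' = A / B := rfl
    have hval : deriv (fun s : ℝ => qmap a μ (Function.update x σ s) σ') (x σ)
        = a σ / B * (Qmat L μ σ σ' - A / B) := by
      rw [hderiv, add_comm c2, ← hB, add_comm c1, ← hA]
      field_simp
    have habs : |deriv (fun s : ℝ => qmap a μ (Function.update x σ s) σ') (x σ)|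
        = (a σ / B) * |Qmat L μ σ σ' - qmap a μ x σ'| := by
      rw [hval, abs_mul, abs_of_pos (div_pos (ha σ) hB0), hq]
    refine ⟨habs, ?_⟩
    rw [habs, hK]
    have h1 := hQr x hx hxs σ σ'
    have hle : a σ / B ≤ M / m := by
      gcongr
      · exact hMle σ
      · exact B_ge a x hx hxs
    exact mul_le_mul hle h1 (abs_nonneg _) (div_nonneg (le_trans hm0.le (hMle σ |>.trans' (haM σ))) hm0.le)
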